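/- Let E be a real finite-dimensional normed vector space, let 0 < ν ≤ 1, let L⁻ ≥ 0 and L⁺ ≥ 0, and let f : E → ℝ be differentiable and satisfy, for every x, y ∈ E, the two-sided bound −(L⁻/(1+ν))·‖x − y‖^{1+ν} ≤ f(y) − f(x) − ⟨f'(x), y − x⟩ ≤ (L⁺/(1+ν))·‖y − x‖^{1+ν}. Then f has ν-Hölder continuous gradient with constant 2^{−ν}·((1+ν)/ν)^ν·(L⁻ + L⁺), i.e. ‖f'(x) − f'(y)‖* ≤ 2^{−ν}·((1+ν)/ν)^ν·(L⁻ + L⁺)·‖x − y‖^ν for all x, y ∈ E. -/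

import Mathlib

open Real

theorem two_sided_approximable_implies_holder_gradient
    {E : Type*} [NormedAddCommGroup E] [NormedSpace ℝ E] [FiniteDimensional ℝ E]
    (ν Lm Lp : ℝ) (hν0 : 0 < ν) (hν1 : ν ≤ 1) (hLm : 0 ≤ Lm) (hLp : 0 ≤ Lp)
    (f : E → ℝ) (f' : E → (E →L[ℝ] ℝ))
    (hdiff : ∀ x, HasFDerivAt f (f' x) x)
    (hlower : ∀ x y : E, -(Lm / (1 + ν)) * ‖x - y‖ ^ (1 + ν) ≤ f y - f x - f' x (y - x))
    (hupper : ∀ x y : E, f y - f x - f' x (y - x) ≤ Lp / (1 + ν) * ‖y - x‖ ^ (1 + ν)) :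
    ∀ x y : E, ‖f' x - f' y‖ ≤ 2 ^ (-ν) * ((1 + ν) / ν) ^ ν * (Lm + Lp) * ‖x - y‖ ^ ν := by
  intro x y
  have hν1' : (0:ℝ) < 1 + ν := by linarith
  set φ : E →L[ℝ] ℝ := f' x - f' y with hφ
  rcases eq_or_lt_of_le (norm_nonneg (x - y)) with h0 | hrpos
  · have hxy : x = y := by rw [← sub_eq_zero]; exact norm_eq_zero.mp h0.symm
    subst hxy
    simp [φ, Real.zero_rpow hν0.ne']
  set r := ‖x - y‖ with hr
  have key : ∀ u v : E, φ u - φ v ≤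
      Lp / (1 + ν) * ‖u - y‖ ^ (1 + ν) + Lm / (1 + ν) * ‖x - u‖ ^ (1 + ν)
      + Lp / (1 + ν) * ‖v - x‖ ^ (1 + ν) + Lm / (1 + ν) * ‖y - v‖ ^ (1 + ν) := by
    intro u v
    have e1 := hlower x u
    have e2 := hupper y u
    have g1 := hlower y v
    have g2 := hupper x v
    simp only [hφ, ContinuousLinearMap.sub_apply, map_sub] at e1 e2 g1 g2 ⊢
    linarith
  have bound : ∀ h : E, φ h ≤ 2 * (Lm + Lp) / (1 + ν) * ((r + ‖h‖) / 2) ^ (1 + ν) := by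
    intro h
    set u := x + (2⁻¹ : ℝ) • (y - x + h) with hu
    set v := x + (2⁻¹ : ℝ) • (y - x - h) with hv
    have huv : u - v = h := by
      simp only [hu, hv]; module
    have n1 : ‖u - y‖ ≤ (r + ‖h‖) / 2 := by
      have : u - y = (2⁻¹ : ℝ) • (h - (y - x)) := by simp only [hu]; module
      rw [this, norm_smul]
      simp only [norm_inv, Real.norm_ofNat]
      have : ‖h - (y - x)‖ ≤ r + ‖h‖ := by
        calc ‖h - (y - x)‖ ≤ ‖h‖ + ‖y - x‖ := norm_sub_le _ _
        _ = r + ‖h‖ := by rw [hr, norm_sub_rev]; ring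
      linarith
    have n2 : ‖x - u‖ ≤ (r + ‖h‖) / 2 := by
      have : x - u = (2⁻¹ : ℝ) • -(y - x + h) := by simp only [hu]; module
      rw [this, norm_smul, norm_neg]
      simp only [norm_inv, Real.norm_ofNat]
      have : ‖y - x + h‖ ≤ r + ‖h‖ := by
        calc ‖y - x + h‖ ≤ ‖y - x‖ + ‖h‖ := norm_add_le _ _
        _ = r + ‖h‖ := by rw [hr, norm_sub_rev]
      linarith
    have n3 : ‖v - x‖ ≤ (r + ‖h‖) / 2 := by
      have : v - x = (2⁻¹ : ℝ) • (y - x - h) := by simp only [hv]; module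
      rw [this, norm_smul]
      simp only [norm_inv, Real.norm_ofNat]
      have : ‖y - x - h‖ ≤ r + ‖h‖ := by
        calc ‖y - x - h‖ ≤ ‖y - x‖ + ‖h‖ := norm_sub_le _ _
        _ = r + ‖h‖ := by rw [hr, norm_sub_rev]
      linarith
    have n4 : ‖y - v‖ ≤ (r + ‖h‖) / 2 := by
      have : y - v = (2⁻¹ : ℝ) • (y - x + h) := by simp only [hv]; module
      rw [this, norm_smul]
      simp only [norm_inv, Real.norm_ofNat]
      have : ‖y - x + h‖ ≤ r + ‖h‖ := by
        calc ‖y - x + h‖ ≤ ‖y - x‖ + ‖h‖ := norm_add_le _ _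
        _ = r + ‖h‖ := by rw [hr, norm_sub_rev]
      linarith
    have hk := key u v
    have hφh : φ u - φ v = φ h := by rw [← map_sub, huv]
    rw [hφh] at hk
    have hsnn : (0:ℝ) ≤ (r + ‖h‖)/2 := by positivity
    have hmono : ∀ w : ℝ, 0 ≤ w → w ≤ (r + ‖h‖)/2 →
        w ^ (1+ν) ≤ ((r + ‖h‖)/2) ^ (1+ν) :=
      fun w hw hw' => Real.rpow_le_rpow hw hw' hν1'.le
    have c1 := mul_le_mul_of_nonneg_left (hmono _ (norm_nonneg _) n1) (div_nonneg hLp hν1'.le)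
    have c2 := mul_le_mul_of_nonneg_left (hmono _ (norm_nonneg _) n2) (div_nonneg hLm hν1'.le)
    have c3 := mul_le_mul_of_nonneg_left (hmono _ (norm_nonneg _) n3) (div_nonneg hLp hν1'.le)
    have c4 := mul_le_mul_of_nonneg_left (hmono _ (norm_nonneg _) n4) (div_nonneg hLm hν1'.le)
    have : 2 * (Lm + Lp) / (1 + ν) * ((r + ‖h‖) / 2) ^ (1 + ν)
        = Lp/(1+ν) * ((r + ‖h‖)/2)^(1+ν) + Lm/(1+ν) * ((r + ‖h‖)/2)^(1+ν)
        + Lp/(1+ν) * ((r + ‖h‖)/2)^(1+ν) + Lm/(1+ν) * ((r + ‖h‖)/2)^(1+ν) := by ring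
    linarith
  -- optimal step length
  set s := r / ν with hsdef
  have hspos : 0 < s := div_pos hrpos hν0
  have hM : 2 * (Lm + Lp) / (1 + ν) * ((r + s) / 2) ^ (1 + ν)
      = 2 ^ (-ν) * ((1 + ν) / ν) ^ ν * (Lm + Lp) * r ^ ν * s := by
    have hc : (0:ℝ) < (1 + ν) / (2 * ν) := by positivity
    have ha : (r + s) / 2 = r * ((1 + ν) / (2 * ν)) := by
      rw [hsdef]; field_simp; ring
    rw [ha, Real.rpow_add (by positivity) 1 ν, Real.rpow_one,
      Real.mul_rpow hrpos.le hc.le]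
    have h2 : ((1 + ν) / (2 * ν)) ^ ν = ((1 + ν) / ν) ^ ν * 2 ^ (-ν) := by
      have he : (1 + ν) / (2 * ν) = ((1 + ν) / ν) * 2⁻¹ := by
        field_simp
      rw [he, Real.mul_rpow (by positivity) (by norm_num),
        Real.inv_rpow (by norm_num), ← Real.rpow_neg (by norm_num)]
    rw [h2, hsdef]
    field_simp
  have hC : (0:ℝ) ≤ 2 ^ (-ν) * ((1 + ν) / ν) ^ ν * (Lm + Lp) * r ^ ν := by positivity
  refine ContinuousLinearMap.opNorm_le_bound _ hC (fun h => ?_)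
  rcases eq_or_ne h 0 with rfl | hh
  · simp
  have hhn : 0 < ‖h‖ := norm_pos_iff.mpr hh
  set h' := (s / ‖h‖) • h with hh'
  have hh'n : ‖h'‖ = s := by
    rw [hh', norm_smul, Real.norm_eq_abs, abs_of_pos (by positivity), div_mul_cancel₀ _ hhn.ne']
  have b1 := bound h'
  have b2 := bound (-h')
  rw [norm_neg, map_neg] at b2
  rw [hh'n] at b1 b2
  have habs : ‖φ h'‖ ≤ 2 * (Lm + Lp) / (1 + ν) * ((r + s) / 2) ^ (1 + ν) := by
    rw [Real.norm_eq_abs, abs_le]; constructor <;> linarith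
  have hφh : φ h = (‖h‖ / s) * φ h' := by
    rw [hh', map_smul, smul_eq_mul]
    field_simp
  rw [hφh, Real.norm_eq_abs, abs_mul, abs_of_pos (by positivity : (0:ℝ) < ‖h‖/s)]
  rw [← Real.norm_eq_abs]
  calc ‖h‖ / s * ‖φ h'‖ ≤ ‖h‖ / s * (2 * (Lm + Lp) / (1 + ν) * ((r + s) / 2) ^ (1 + ν)) :=
        mul_le_mul_of_nonneg_left habs (by positivity)
    _ = ‖h‖ / s * (2 ^ (-ν) * ((1 + ν) / ν) ^ ν * (Lm + Lp) * r ^ ν * s) := by rw [hM]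
    _ = 2 ^ (-ν) * ((1 + ν) / ν) ^ ν * (Lm + Lp) * r ^ ν * ‖h‖ := by
        field_simp
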